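/- The Banach space l(r,s,t,p;Δ) with 1 < p_n ≤ M and the Luxemburg norm has the Kadec–Klee property: if ‖x‖ = 1, ‖x^m‖ → 1, and x^m → x weakly, then ‖x^m − x‖ → 0. -/

import Mathlib

open Finset Filter Topology ENNReal

/-- The difference operator `Δ` with the convention `x₋₁ = 0`. -/
def del (x : ℕ → ℝ) (k : ℕ) : ℝ :=
  x k - if k = 0 then 0 else x (k - 1)

/-- The generalized-means-of-differences transform `(A(r,s,t)·Δ)x`. -/
noncomputable def Amap (r s t : ℕ → ℝ) (x : ℕ → ℝ) (n : ℕ) : ℝ :=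
  (1 / r n) * ∑ k ∈ Finset.range (n + 1), s (n - k) * t k * del x k

/-- The modular `σ_p` on `l(r,s,t,p;Δ)`, with values in `[0,∞]`. -/
noncomputable def sigmaP (r s t p : ℕ → ℝ) (x : ℕ → ℝ) : ℝ≥0∞ :=
  ∑' n, ENNReal.ofReal (|Amap r s t x n| ^ p n)

/-- The space `l(r,s,t,p;Δ)`. -/
def lrstp (r s t p : ℕ → ℝ) : Set (ℕ → ℝ) :=
  {x | sigmaP r s t p x < ⊤}

/-- The paranorm `h̃` on `l(r,s,t,p;Δ)`. -/
noncomputable def htilde (r s t p : ℕ → ℝ) (M : ℝ) (x : ℕ → ℝ) : ℝ :=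
  ((sigmaP r s t p x).toReal) ^ (1 / M)

/-- The Luxemburg norm on `l(r,s,t,p;Δ)`. -/
noncomputable def lux (r s t p : ℕ → ℝ) (x : ℕ → ℝ) : ℝ :=
  sInf {c : ℝ | 0 < c ∧ sigmaP r s t p (c⁻¹ • x) ≤ 1}


lemma del_sub (x y : ℕ → ℝ) (k : ℕ) : del (x - y) k = del x k - del y k := by
  simp only [del, Pi.sub_apply]; split <;> ring

lemma del_smul (c : ℝ) (x : ℕ → ℝ) (k : ℕ) : del (c • x) k = c * del x k := by
  simp only [del, Pi.smul_apply, smul_eq_mul]; split <;> ring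

lemma del_add (x y : ℕ → ℝ) (k : ℕ) : del (x + y) k = del x k + del y k := by
  simp only [del, Pi.add_apply]; split <;> ring

lemma Amap_sub (r s t : ℕ → ℝ) (x y : ℕ → ℝ) (n : ℕ) :
    Amap r s t (x - y) n = Amap r s t x n - Amap r s t y n := by
  simp only [Amap, del_sub, mul_sub, Finset.sum_sub_distrib]

lemma Amap_add (r s t : ℕ → ℝ) (x y : ℕ → ℝ) (n : ℕ) :
    Amap r s t (x + y) n = Amap r s t x n + Amap r s t y n := by
  simp only [Amap, del_add, mul_add, Finset.sum_add_distrib]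

lemma Amap_smul (r s t : ℕ → ℝ) (c : ℝ) (x : ℕ → ℝ) (n : ℕ) :
    Amap r s t (c • x) n = c * Amap r s t x n := by
  simp only [Amap, del_smul, Finset.mul_sum]
  exact Finset.sum_congr rfl fun k _ => by ring


lemma rpow_sub_le (M u v q : ℝ) (hq0 : 0 ≤ q) (hqM : q ≤ M) :
    |u - v| ^ q ≤ (2:ℝ) ^ M * (|u| ^ q + |v| ^ q) := by
  have h2M : ((2:ℝ) ^ q) ≤ (2:ℝ) ^ M := Real.rpow_le_rpow_of_exponent_le one_le_two hqM
  have hmax : |u - v| ≤ 2 * max |u| |v| := by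
    have := abs_sub u v
    rcases le_total |u| |v| with h | h
    · calc |u - v| ≤ |u| + |v| := abs_sub _ _
        _ ≤ 2 * max |u| |v| := by rw [max_eq_right h]; linarith
    · calc |u - v| ≤ |u| + |v| := abs_sub _ _
        _ ≤ 2 * max |u| |v| := by rw [max_eq_left h]; linarith
  have h1 : |u - v| ^ q ≤ (2 * max |u| |v|) ^ q :=
    Real.rpow_le_rpow (abs_nonneg _) hmax hq0
  have h2 : (2 * max |u| |v|) ^ q = 2 ^ q * (max |u| |v|) ^ q :=
    Real.mul_rpow (by norm_num) (le_max_of_le_left (abs_nonneg _))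
  have h3 : (max |u| |v|) ^ q ≤ |u| ^ q + |v| ^ q := by
    rcases max_cases |u| |v| with ⟨he, _⟩ | ⟨he, _⟩ <;> rw [he]
    · nlinarith [Real.rpow_nonneg (abs_nonneg v) q]
    · nlinarith [Real.rpow_nonneg (abs_nonneg u) q]
  calc |u - v| ^ q ≤ 2 ^ q * (max |u| |v|) ^ q := by rw [← h2]; exact h1
    _ ≤ 2 ^ M * (max |u| |v|) ^ q := by
        refine mul_le_mul_of_nonneg_right h2M ?_
        positivity
    _ ≤ 2 ^ M * (|u| ^ q + |v| ^ q) := by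
        refine mul_le_mul_of_nonneg_left h3 ?_
        positivity

lemma core_lemma (p : ℕ → ℝ) (M : ℝ) (hp0 : ∀ n, 0 < p n) (hpM : ∀ n, p n ≤ M)
    (a : ℕ → ℝ) (as : ℕ → ℕ → ℝ)
    (hG : Summable (fun n => |a n| ^ p n))
    (hF : ∀ m, Summable (fun n => |as m n| ^ p n))
    (hsum : Tendsto (fun m => ∑' n, |as m n| ^ p n) atTop (𝓝 (∑' n, |a n| ^ p n)))
    (hpt : ∀ n, Tendsto (fun m => as m n) atTop (𝓝 (a n))) :
    Tendsto (fun m => ∑' n, |as m n - a n| ^ p n) atTop (𝓝 0) := by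
  set K : ℝ := (2:ℝ) ^ M with hK
  have hK0 : 0 < K := Real.rpow_pos_of_pos two_pos M
  -- summability of differences
  have hD : ∀ m, Summable (fun n => |as m n - a n| ^ p n) := by
    intro m
    refine Summable.of_nonneg_of_le (fun n => Real.rpow_nonneg (abs_nonneg _) _)
      (fun n => rpow_sub_le M (as m n) (a n) (p n) (hp0 n).le (hpM n)) ?_
    exact ((hF m).add hG).mul_left K
  -- pointwise convergence of F and D terms
  have hFpt : ∀ n, Tendsto (fun m => |as m n| ^ p n) atTop (𝓝 (|a n| ^ p n)) := by
    intro n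
    exact ((hpt n).abs).rpow_const (Or.inr (hp0 n).le)
  have hDpt : ∀ n, Tendsto (fun m => |as m n - a n| ^ p n) atTop (𝓝 0) := by
    intro n
    have h1 : Tendsto (fun m => |as m n - a n|) atTop (𝓝 0) := by
      have := ((hpt n).sub tendsto_const_nhds (g := fun _ => a n)).abs
      simpa using this
    have := h1.rpow_const (Or.inr (hp0 n).le)
    rwa [Real.zero_rpow (ne_of_gt (hp0 n))] at this
  rw [NormedAddCommGroup.tendsto_nhds_zero]
  intro ε hε
  set δ : ℝ := ε / (2 * (1 + 3 * K)) with hδdef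
  have hδ0 : 0 < δ := by positivity
  -- choose N with tail of G small
  have htail : Tendsto (fun N => ∑' k, |a (k + N)| ^ p (k + N)) atTop (𝓝 0) := by
    exact _root_.tendsto_sum_nat_add (fun n => |a n| ^ p n)
  obtain ⟨N, hN⟩ := (htail.eventually (gt_mem_nhds hδ0)).exists
  set TG : ℝ := ∑' k, |a (k + N)| ^ p (k + N) with hTG
  set HG : ℝ := ∑ n ∈ range N, |a n| ^ p n with hHG
  have hsplitG : HG + TG = ∑' n, |a n| ^ p n := Summable.sum_add_tsum_nat_add N hG
  -- eventual facts
  have ev1 : ∀ᶠ m in atTop, |(∑' n, |as m n| ^ p n) - ∑' n, |a n| ^ p n| < δ / 2 := by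
    have := (Metric.tendsto_atTop.1 hsum) (δ / 2) (by positivity)
    obtain ⟨N1, hN1⟩ := this
    exact eventually_atTop.2 ⟨N1, fun m hm => by simpa [Real.dist_eq] using hN1 m hm⟩
  have ev2 : ∀ᶠ m in atTop, |(∑ n ∈ range N, |as m n| ^ p n) - HG| < δ / 2 := by
    have hhead : Tendsto (fun m => ∑ n ∈ range N, |as m n| ^ p n) atTop (𝓝 HG) := by
      exact tendsto_finset_sum _ fun n _ => hFpt n
    have := (Metric.tendsto_atTop.1 hhead) (δ / 2) (by positivity)
    obtain ⟨N1, hN1⟩ := this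
    exact eventually_atTop.2 ⟨N1, fun m hm => by simpa [Real.dist_eq] using hN1 m hm⟩
  have ev3 : ∀ᶠ m in atTop, ∑ n ∈ range N, |as m n - a n| ^ p n < δ := by
    have hhead : Tendsto (fun m => ∑ n ∈ range N, |as m n - a n| ^ p n) atTop (𝓝 0) := by
      have := tendsto_finset_sum (range N) fun n (_ : n ∈ range N) => hDpt n
      simpa using this
    exact (hhead.eventually (gt_mem_nhds hδ0))
  filter_upwards [ev1, ev2, ev3] with m h1 h2 h3
  -- tail of F m
  have hsplitF : (∑ n ∈ range N, |as m n| ^ p n) + (∑' k, |as m (k + N)| ^ p (k + N))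
      = ∑' n, |as m n| ^ p n := Summable.sum_add_tsum_nat_add N (hF m)
  have htailF : ∑' k, |as m (k + N)| ^ p (k + N) < 2 * δ := by
    have e1 : ∑' n, |as m n| ^ p n < (∑' n, |a n| ^ p n) + δ / 2 := by
      have := abs_lt.1 h1; linarith [this.2]
    have e2 : HG - δ / 2 < ∑ n ∈ range N, |as m n| ^ p n := by
      have := abs_lt.1 h2; linarith [this.1]
    have : ∑' k, |as m (k + N)| ^ p (k + N)
        = (∑' n, |as m n| ^ p n) - ∑ n ∈ range N, |as m n| ^ p n := by linarith [hsplitF]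
    rw [this]
    have : TG = (∑' n, |a n| ^ p n) - HG := by linarith [hsplitG]
    nlinarith [hN]
  -- tail of D m
  have hsplitD : (∑ n ∈ range N, |as m n - a n| ^ p n)
      + (∑' k, |as m (k + N) - a (k + N)| ^ p (k + N))
      = ∑' n, |as m n - a n| ^ p n := Summable.sum_add_tsum_nat_add N (hD m)
  have htailD : ∑' k, |as m (k + N) - a (k + N)| ^ p (k + N)
      ≤ K * ((∑' k, |as m (k + N)| ^ p (k + N)) + TG) := by
    have hsumm1 : Summable (fun k => |as m (k + N)| ^ p (k + N)) :=
      ((summable_nat_add_iff (f := fun n => |as m n| ^ p n) N).2 (hF m))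
    have hsumm2 : Summable (fun k => |a (k + N)| ^ p (k + N)) :=
      ((summable_nat_add_iff (f := fun n => |a n| ^ p n) N).2 hG)
    calc ∑' k, |as m (k + N) - a (k + N)| ^ p (k + N)
        ≤ ∑' k, K * (|as m (k + N)| ^ p (k + N) + |a (k + N)| ^ p (k + N)) := by
          refine Summable.tsum_le_tsum (fun k => rpow_sub_le M _ _ _ (hp0 _).le (hpM _))
            ((summable_nat_add_iff (f := fun n => |as m n - a n| ^ p n) N).2 (hD m)) ((hsumm1.add hsumm2).mul_left K)
      _ = K * ((∑' k, |as m (k + N)| ^ p (k + N)) + TG) := by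
          rw [tsum_mul_left, Summable.tsum_add hsumm1 hsumm2]
  have hDnonneg : (0:ℝ) ≤ ∑' n, |as m n - a n| ^ p n :=
    tsum_nonneg fun n => Real.rpow_nonneg (abs_nonneg _) _
  have htailFnn : (0:ℝ) ≤ ∑' k, |as m (k + N)| ^ p (k + N) :=
    tsum_nonneg fun n => Real.rpow_nonneg (abs_nonneg _) _
  rw [Real.norm_eq_abs, abs_of_nonneg hDnonneg]
  have : ∑' n, |as m n - a n| ^ p n < δ + K * (2 * δ + δ) := by
    have := htailF
    nlinarith [htailD, hsplitD, h3, hN]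
  calc ∑' n, |as m n - a n| ^ p n < δ + K * (2 * δ + δ) := this
    _ = (1 + 3 * K) * δ := by ring
    _ = ε / 2 := by rw [hδdef]; field_simp
    _ < ε := by linarith

section main
variable (r s t p : ℕ → ℝ) (M : ℝ) (hp : ∀ n, 1 < p n) (hpM : ∀ n, p n ≤ M)
include hp

omit hp in
lemma sigma_inv_smul (z : ℕ → ℝ) (c : ℝ) (hc : 0 < c) :
    sigmaP r s t p (c⁻¹ • z) =
      ∑' n, ENNReal.ofReal (c⁻¹ ^ p n * |Amap r s t z n| ^ p n) := by
  unfold sigmaP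
  refine tsum_congr fun n => ?_
  rw [Amap_smul, abs_mul, Real.mul_rpow (abs_nonneg _) (abs_nonneg _),
    abs_of_pos (inv_pos.2 hc)]

lemma S_mono (z : ℕ → ℝ) (c c' : ℝ)
    (h : c ∈ {c : ℝ | 0 < c ∧ sigmaP r s t p (c⁻¹ • z) ≤ 1}) (hcc : c ≤ c') :
    c' ∈ {c : ℝ | 0 < c ∧ sigmaP r s t p (c⁻¹ • z) ≤ 1} := by
  obtain ⟨hc0, hc1⟩ := h
  have hc'0 : 0 < c' := lt_of_lt_of_le hc0 hcc
  refine ⟨hc'0, le_trans ?_ hc1⟩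
  rw [sigma_inv_smul r s t p z c hc0, sigma_inv_smul r s t p z c' hc'0]
  refine ENNReal.tsum_le_tsum fun n => ENNReal.ofReal_le_ofReal ?_
  have h1 : (c'⁻¹ : ℝ) ^ p n ≤ c⁻¹ ^ p n :=
    Real.rpow_le_rpow (by positivity) (by
      exact inv_anti₀ hc0 hcc) (le_of_lt (lt_trans one_pos (hp n)))
  exact mul_le_mul_of_nonneg_right h1 (Real.rpow_nonneg (abs_nonneg _) _)

lemma S_nonempty (z : ℕ → ℝ) (hz : z ∈ lrstp r s t p) :
    Set.Nonempty {c : ℝ | 0 < c ∧ sigmaP r s t p (c⁻¹ • z) ≤ 1} := by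
  set c : ℝ := max 1 (sigmaP r s t p z).toReal with hcdef
  have hc1 : (1:ℝ) ≤ c := le_max_left _ _
  have hc0 : 0 < c := lt_of_lt_of_le one_pos hc1
  refine ⟨c, hc0, ?_⟩
  rw [sigma_inv_smul r s t p z c hc0]
  have hle : ∀ n, ENNReal.ofReal (c⁻¹ ^ p n * |Amap r s t z n| ^ p n) ≤
      ENNReal.ofReal c⁻¹ * ENNReal.ofReal (|Amap r s t z n| ^ p n) := by
    intro n
    rw [← ENNReal.ofReal_mul (by positivity)]
    refine ENNReal.ofReal_le_ofReal (mul_le_mul_of_nonneg_right ?_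
      (Real.rpow_nonneg (abs_nonneg _) _))
    calc c⁻¹ ^ p n = c ^ (-(p n)) := by rw [Real.inv_rpow hc0.le, ← Real.rpow_neg hc0.le]
      _ ≤ c ^ (-1 : ℝ) := Real.rpow_le_rpow_of_exponent_le hc1 (by linarith [hp n])
      _ = c⁻¹ := by rw [Real.rpow_neg_one]
  calc ∑' n, ENNReal.ofReal (c⁻¹ ^ p n * |Amap r s t z n| ^ p n)
      ≤ ∑' n, ENNReal.ofReal c⁻¹ * ENNReal.ofReal (|Amap r s t z n| ^ p n) :=
        ENNReal.tsum_le_tsum hle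
    _ = ENNReal.ofReal c⁻¹ * sigmaP r s t p z := by rw [ENNReal.tsum_mul_left]; rfl
    _ ≤ ENNReal.ofReal c⁻¹ * ENNReal.ofReal c := by
        refine mul_le_mul_right ?_ _
        refine le_trans ?_ (ENNReal.ofReal_le_ofReal (le_max_right 1 _))
        rw [ENNReal.ofReal_toReal (ne_of_lt hz)]
    _ = 1 := by
        rw [← ENNReal.ofReal_mul (by positivity), inv_mul_cancel₀ (ne_of_gt hc0)]
        exact ENNReal.ofReal_one


omit hp in
lemma lux_nonneg (z : ℕ → ℝ) : 0 ≤ lux r s t p z :=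
  Real.sInf_nonneg fun c hc => le_of_lt hc.1

lemma sigma_le_one_of_lux_lt (z : ℕ → ℝ) (hz : z ∈ lrstp r s t p) (c : ℝ)
    (hc : lux r s t p z < c) : sigmaP r s t p (c⁻¹ • z) ≤ 1 := by
  obtain ⟨c0, hc0S, hc0lt⟩ := exists_lt_of_csInf_lt (S_nonempty r s t p hp z hz) hc
  exact (S_mono r s t p hp z c0 c hc0S hc0lt.le).2

lemma abs_Amap_le (z : ℕ → ℝ) (hz : z ∈ lrstp r s t p) (n : ℕ) :
    |Amap r s t z n| ≤ lux r s t p z := by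
  by_contra hlt
  push_neg at hlt
  set c : ℝ := (lux r s t p z + |Amap r s t z n|) / 2 with hcdef
  have h1 : lux r s t p z < c := by
    rw [hcdef]; linarith
  have h2 : c < |Amap r s t z n| := by rw [hcdef]; linarith
  have hc0 : 0 < c := lt_of_le_of_lt (lux_nonneg r s t p z) h1
  have hσ := sigma_le_one_of_lux_lt r s t p hp z hz c h1
  rw [sigma_inv_smul r s t p z c hc0] at hσ
  have hterm : ENNReal.ofReal (c⁻¹ ^ p n * |Amap r s t z n| ^ p n) ≤ 1 :=
    le_trans (ENNReal.le_tsum n) hσ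
  rw [ENNReal.ofReal_le_one] at hterm
  have hrw : c⁻¹ ^ p n * |Amap r s t z n| ^ p n = (c⁻¹ * |Amap r s t z n|) ^ p n := by
    rw [Real.mul_rpow (by positivity) (abs_nonneg _)]
  rw [hrw] at hterm
  have hbig : 1 < c⁻¹ * |Amap r s t z n| := by
    have := (one_lt_div hc0).2 h2
    rwa [div_eq_inv_mul] at this
  have : 1 < (c⁻¹ * |Amap r s t z n|) ^ p n :=
    Real.one_lt_rpow_iff_of_pos (lt_trans one_pos hbig) |>.2
      (Or.inl ⟨hbig, lt_trans one_pos (hp n)⟩)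
  linarith

include hpM in
lemma sigma_le_pow (z : ℕ → ℝ) (hz : z ∈ lrstp r s t p) (c : ℝ) (hc1 : 1 ≤ c)
    (hc : lux r s t p z < c) : sigmaP r s t p z ≤ ENNReal.ofReal (c ^ M) := by
  have hc0 : 0 < c := lt_of_lt_of_le one_pos hc1
  have hσ := sigma_le_one_of_lux_lt r s t p hp z hz c hc
  rw [sigma_inv_smul r s t p z c hc0] at hσ
  have key : ∀ n, ENNReal.ofReal (|Amap r s t z n| ^ p n) ≤
      ENNReal.ofReal (c ^ M) * ENNReal.ofReal (c⁻¹ ^ p n * |Amap r s t z n| ^ p n) := by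
    intro n
    rw [← ENNReal.ofReal_mul (by positivity)]
    refine ENNReal.ofReal_le_ofReal ?_
    have h1 : c ^ p n ≤ c ^ M := Real.rpow_le_rpow_of_exponent_le hc1 (hpM n)
    have h2 : c ^ p n * (c⁻¹ ^ p n * |Amap r s t z n| ^ p n) = |Amap r s t z n| ^ p n := by
      rw [← mul_assoc, ← Real.mul_rpow hc0.le (by positivity : (0:ℝ) ≤ c⁻¹),
        mul_inv_cancel₀ (ne_of_gt hc0), Real.one_rpow, one_mul]
    calc |Amap r s t z n| ^ p n
        = c ^ p n * (c⁻¹ ^ p n * |Amap r s t z n| ^ p n) := h2.symm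
      _ ≤ c ^ M * (c⁻¹ ^ p n * |Amap r s t z n| ^ p n) :=
          mul_le_mul_of_nonneg_right h1 (by positivity)
  calc sigmaP r s t p z
      ≤ ∑' n, ENNReal.ofReal (c ^ M) * ENNReal.ofReal (c⁻¹ ^ p n * |Amap r s t z n| ^ p n) :=
        ENNReal.tsum_le_tsum key
    _ = ENNReal.ofReal (c ^ M) * ∑' n, ENNReal.ofReal (c⁻¹ ^ p n * |Amap r s t z n| ^ p n) :=
        ENNReal.tsum_mul_left
    _ ≤ ENNReal.ofReal (c ^ M) * 1 := mul_le_mul_right hσ _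
    _ = ENNReal.ofReal (c ^ M) := mul_one _

include hpM in
lemma pow_le_sigma (z : ℕ → ℝ) (c : ℝ) (hc0 : 0 < c) (hc1 : c ≤ 1)
    (hc : c < lux r s t p z) : ENNReal.ofReal (c ^ M) ≤ sigmaP r s t p z := by
  have hnotS : ¬ (0 < c ∧ sigmaP r s t p (c⁻¹ • z) ≤ 1) := by
    intro hS
    have hS' : c ∈ {d : ℝ | 0 < d ∧ sigmaP r s t p (d⁻¹ • z) ≤ 1} := hS
    have hle : lux r s t p z ≤ c := by
      rw [lux]; exact csInf_le ⟨0, fun d hd => le_of_lt hd.1⟩ hS'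
    exact absurd hle (not_le.2 hc)
  have hσgt : 1 < sigmaP r s t p (c⁻¹ • z) := by
    by_contra h
    exact hnotS ⟨hc0, not_lt.1 h⟩
  have hinv1 : (1:ℝ) ≤ c⁻¹ := (one_le_inv₀ hc0).2 hc1
  have hbound : sigmaP r s t p (c⁻¹ • z) ≤
      ENNReal.ofReal (c⁻¹ ^ M) * sigmaP r s t p z := by
    rw [sigma_inv_smul r s t p z c hc0]
    have key : ∀ n, ENNReal.ofReal (c⁻¹ ^ p n * |Amap r s t z n| ^ p n) ≤
        ENNReal.ofReal (c⁻¹ ^ M) * ENNReal.ofReal (|Amap r s t z n| ^ p n) := by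
      intro n
      rw [← ENNReal.ofReal_mul (by positivity)]
      refine ENNReal.ofReal_le_ofReal (mul_le_mul_of_nonneg_right ?_ (by positivity))
      exact Real.rpow_le_rpow_of_exponent_le hinv1 (hpM n)
    calc ∑' n, ENNReal.ofReal (c⁻¹ ^ p n * |Amap r s t z n| ^ p n)
        ≤ ∑' n, ENNReal.ofReal (c⁻¹ ^ M) * ENNReal.ofReal (|Amap r s t z n| ^ p n) :=
          ENNReal.tsum_le_tsum key
      _ = ENNReal.ofReal (c⁻¹ ^ M) * sigmaP r s t p z := ENNReal.tsum_mul_left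
  have hgt : 1 < ENNReal.ofReal (c⁻¹ ^ M) * sigmaP r s t p z := lt_of_lt_of_le hσgt hbound
  by_contra hcon
  push_neg at hcon
  have hmul : ENNReal.ofReal (c⁻¹ ^ M) * sigmaP r s t p z <
      ENNReal.ofReal (c⁻¹ ^ M) * ENNReal.ofReal (c ^ M) := by
    refine (ENNReal.mul_lt_mul_iff_right (a := ENNReal.ofReal (c⁻¹ ^ M)) ?_ ?_).2 hcon
    · simp [ENNReal.ofReal_eq_zero, not_le]
      positivity
    · exact ENNReal.ofReal_ne_top
  have hone : ENNReal.ofReal (c⁻¹ ^ M) * ENNReal.ofReal (c ^ M) = 1 := by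
    rw [← ENNReal.ofReal_mul (by positivity), ← Real.mul_rpow (by positivity) hc0.le,
      inv_mul_cancel₀ (ne_of_gt hc0), Real.one_rpow, ENNReal.ofReal_one]
  rw [hone] at hmul
  exact absurd (lt_trans hgt hmul) (lt_irrefl _)

include hpM in
lemma lux_le_of_sigma_le (z : ℕ → ℝ) (ε : ℝ) (hε0 : 0 < ε) (hε1 : ε ≤ 1)
    (h : sigmaP r s t p z ≤ ENNReal.ofReal (ε ^ M)) : lux r s t p z ≤ ε := by
  have hinv1 : (1:ℝ) ≤ ε⁻¹ := (one_le_inv₀ hε0).2 hε1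
  have hεS : ε ∈ {c : ℝ | 0 < c ∧ sigmaP r s t p (c⁻¹ • z) ≤ 1} := by
    refine ⟨hε0, ?_⟩
    rw [sigma_inv_smul r s t p z ε hε0]
    have key : ∀ n, ENNReal.ofReal (ε⁻¹ ^ p n * |Amap r s t z n| ^ p n) ≤
        ENNReal.ofReal (ε⁻¹ ^ M) * ENNReal.ofReal (|Amap r s t z n| ^ p n) := by
      intro n
      rw [← ENNReal.ofReal_mul (by positivity)]
      refine ENNReal.ofReal_le_ofReal (mul_le_mul_of_nonneg_right ?_ (by positivity))
      exact Real.rpow_le_rpow_of_exponent_le hinv1 (hpM n)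
    calc ∑' n, ENNReal.ofReal (ε⁻¹ ^ p n * |Amap r s t z n| ^ p n)
        ≤ ∑' n, ENNReal.ofReal (ε⁻¹ ^ M) * ENNReal.ofReal (|Amap r s t z n| ^ p n) :=
          ENNReal.tsum_le_tsum key
      _ = ENNReal.ofReal (ε⁻¹ ^ M) * sigmaP r s t p z := ENNReal.tsum_mul_left
      _ ≤ ENNReal.ofReal (ε⁻¹ ^ M) * ENNReal.ofReal (ε ^ M) := mul_le_mul_right h _
      _ = 1 := by
          rw [← ENNReal.ofReal_mul (by positivity), ← Real.mul_rpow (by positivity) hε0.le,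
            inv_mul_cancel₀ (ne_of_gt hε0), Real.one_rpow, ENNReal.ofReal_one]
  rw [lux]; exact csInf_le ⟨0, fun d hd => le_of_lt hd.1⟩ hεS

omit hp in
lemma summable_of_mem (z : ℕ → ℝ) (hz : z ∈ lrstp r s t p) :
    Summable (fun n => |Amap r s t z n| ^ p n) := by
  have h1 : (∑' n, ENNReal.ofReal (|Amap r s t z n| ^ p n)) ≠ ⊤ := ne_of_lt hz
  refine (ENNReal.summable_toReal h1).congr fun n => ?_
  rw [ENNReal.toReal_ofReal (Real.rpow_nonneg (abs_nonneg _) _)]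

omit hp in
lemma tsum_eq_toReal (z : ℕ → ℝ) :
    ∑' n, |Amap r s t z n| ^ p n = (sigmaP r s t p z).toReal := by
  rw [sigmaP, ENNReal.tsum_toReal_eq (fun n => ENNReal.ofReal_ne_top)]
  exact tsum_congr fun n =>
    (ENNReal.toReal_ofReal (Real.rpow_nonneg (abs_nonneg _) _)).symm

end main


theorem lrstp_kadec_klee
    (r s t p : ℕ → ℝ) (hr : ∀ n, r n ≠ 0) (ht : ∀ n, t n ≠ 0) (hs0 : s 0 ≠ 0)
    (M : ℝ) (hp : ∀ n, 1 < p n) (hpM : ∀ n, p n ≤ M)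
    (x : ℕ → ℝ) (hx : x ∈ lrstp r s t p) (hx1 : lux r s t p x = 1)
    (xs : ℕ → ℕ → ℝ) (hxs : ∀ m, xs m ∈ lrstp r s t p)
    (hnorm : Tendsto (fun m => lux r s t p (xs m)) atTop (𝓝 1))
    -- weak convergence: every norm-bounded linear functional on the space
    -- converges along the sequence
    (hweak : ∀ f : (ℕ → ℝ) →ₗ[ℝ] ℝ,
      (∃ C : ℝ, ∀ z ∈ lrstp r s t p, |f z| ≤ C * lux r s t p z) →
      Tendsto (fun m => f (xs m)) atTop (𝓝 (f x))) :
    Tendsto (fun m => lux r s t p (xs m - x)) atTop (𝓝 0) := by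
  have hM1 : (1:ℝ) < M := lt_of_lt_of_le (hp 0) (hpM 0)
  have hM0 : (0:ℝ) < M := lt_trans one_pos hM1
  -- pointwise convergence of the A-coordinates
  have hpt : ∀ n, Tendsto (fun m => Amap r s t (xs m) n) atTop (𝓝 (Amap r s t x n)) := by
    intro n
    have := hweak
      { toFun := fun z => Amap r s t z n
        map_add' := fun y z => Amap_add r s t y z n
        map_smul' := fun c z => by simpa using Amap_smul r s t c z n }
      ⟨1, fun z hz => by simpa using abs_Amap_le r s t p hp z hz n⟩
    simpa using this
  have hp0 : ∀ n, 0 < p n := fun n => lt_trans one_pos (hp n)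
  have hsummG : Summable (fun n => |Amap r s t x n| ^ p n) :=
    summable_of_mem r s t p x hx
  have hsummF : ∀ m, Summable (fun n => |Amap r s t (xs m) n| ^ p n) :=
    fun m => summable_of_mem r s t p (xs m) (hxs m)
  -- sigmaP x = 1
  have hσx : sigmaP r s t p x = 1 := by
    have hub : ∀ k : ℕ, sigmaP r s t p x ≤ ENNReal.ofReal ((1 + 1/((k:ℝ)+1)) ^ M) := by
      intro k
      have hk : (0:ℝ) < 1/((k:ℝ)+1) := by positivity
      refine sigma_le_pow r s t p M hp hpM x hx _ (by linarith) ?_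
      rw [hx1]; linarith
    have hlb : ∀ k : ℕ, ENNReal.ofReal ((1 - 1/((k:ℝ)+2)) ^ M) ≤ sigmaP r s t p x := by
      intro k
      have hk : (0:ℝ) < 1/((k:ℝ)+2) := by positivity
      have hk2 : (1:ℝ)/((k:ℝ)+2) < 1 := by
        rw [div_lt_one (by positivity)]
        have : (0:ℝ) ≤ (k:ℝ) := Nat.cast_nonneg k
        linarith
      refine pow_le_sigma r s t p M hp hpM x _ (by linarith) (by linarith) ?_
      rw [hx1]; linarith
    have hbase1 : Tendsto (fun k : ℕ => 1 + 1/((k:ℝ)+1)) atTop (𝓝 1) := by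
      simpa using tendsto_const_nhds.add (tendsto_one_div_add_atTop_nhds_zero_nat (𝕜 := ℝ))
    have hbase2 : Tendsto (fun k : ℕ => 1 - 1/((k:ℝ)+2)) atTop (𝓝 1) := by
      have h2 : Tendsto (fun k : ℕ => 1/((k:ℝ)+2)) atTop (𝓝 0) := by
        have h3 := (tendsto_one_div_add_atTop_nhds_zero_nat (𝕜 := ℝ)).comp (tendsto_add_atTop_nat 1)
        refine Tendsto.congr (fun k => ?_) h3
        simp only [Function.comp]
        push_cast
        ring
      simpa using tendsto_const_nhds.sub h2
    have h1 : Tendsto (fun k : ℕ => (1 + 1/((k:ℝ)+1)) ^ M) atTop (𝓝 1) := by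
      simpa [Real.one_rpow] using hbase1.rpow_const (Or.inr hM0.le)
    have h2 : Tendsto (fun k : ℕ => (1 - 1/((k:ℝ)+2)) ^ M) atTop (𝓝 1) := by
      simpa [Real.one_rpow] using hbase2.rpow_const (Or.inr hM0.le)
    have htendu := (ENNReal.continuous_ofReal.tendsto 1).comp h1
    have htendl := (ENNReal.continuous_ofReal.tendsto 1).comp h2
    rw [ENNReal.ofReal_one] at htendu htendl
    exact le_antisymm (ge_of_tendsto' htendu hub) (le_of_tendsto' htendl hlb)
  have hGsum1 : ∑' n, |Amap r s t x n| ^ p n = 1 := by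
    rw [tsum_eq_toReal r s t p x, hσx, ENNReal.toReal_one]
  -- convergence of the modulars
  have hFsum : Tendsto (fun m => ∑' n, |Amap r s t (xs m) n| ^ p n) atTop (𝓝 1) := by
    rw [Metric.tendsto_atTop]
    intro ε hε
    have hcont : ContinuousAt (fun c : ℝ => c ^ M) 1 :=
      Real.continuousAt_rpow_const 1 M (Or.inr hM0.le)
    rw [Metric.continuousAt_iff] at hcont
    obtain ⟨δ, hδ0, hδ⟩ := hcont ε hε
    set η : ℝ := min δ 1 / 2 with hηdef
    have hmin0 : 0 < min δ 1 := lt_min hδ0 one_pos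
    have hη0 : 0 < η := div_pos hmin0 two_pos
    have hηδ : η < δ := lt_of_lt_of_le (half_lt_self hmin0) (min_le_left _ _)
    have hη1 : η < 1 := lt_of_lt_of_le (half_lt_self hmin0) (min_le_right _ _)
    obtain ⟨N, hN⟩ := Metric.tendsto_atTop.1 hnorm η hη0
    refine ⟨N, fun m hm => ?_⟩
    have hLm := hN m hm
    rw [Real.dist_eq] at hLm
    have hLm' := abs_lt.1 hLm
    have hLu : lux r s t p (xs m) < 1 + η := by linarith [hLm'.2]
    have hLl : 1 - η < lux r s t p (xs m) := by linarith [hLm'.1]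
    have hup := sigma_le_pow r s t p M hp hpM (xs m) (hxs m) (1+η) (by linarith) hLu
    have hlo := pow_le_sigma r s t p M hp hpM (xs m) (1-η) (by linarith) (by linarith) hLl
    have hupr : ∑' n, |Amap r s t (xs m) n| ^ p n ≤ (1+η)^M := by
      rw [tsum_eq_toReal r s t p (xs m)]
      exact ENNReal.toReal_le_of_le_ofReal (by positivity) hup
    have hlor : (1-η)^M ≤ ∑' n, |Amap r s t (xs m) n| ^ p n := by
      rw [tsum_eq_toReal r s t p (xs m)]
      exact (ENNReal.ofReal_le_iff_le_toReal (ne_of_lt (hxs m))).1 hlo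
    have e1 : |(1+η)^M - 1| < ε := by
      have hd : dist (1+η) 1 < δ := by
        rw [Real.dist_eq]
        simpa [abs_of_nonneg hη0.le] using hηδ
      have := hδ hd
      simpa [Real.dist_eq, Real.one_rpow] using this
    have e2 : |(1-η)^M - 1| < ε := by
      have hd : dist (1-η) 1 < δ := by
        rw [Real.dist_eq]
        have : |1 - η - 1| = η := by rw [abs_of_nonpos (by linarith)]; ring
        rw [this]; exact hηδ
      have := hδ hd
      simpa [Real.dist_eq, Real.one_rpow] using this
    have e1' := abs_lt.1 e1
    have e2' := abs_lt.1 e2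
    rw [Real.dist_eq, abs_lt]
    constructor
    · linarith [e2'.1]
    · linarith [e1'.2]
  -- apply the core lemma
  have hcore := core_lemma p M hp0 hpM (fun n => Amap r s t x n)
    (fun m n => Amap r s t (xs m) n) hsummG hsummF (by rw [hGsum1]; exact hFsum) hpt
  -- conclude
  rw [NormedAddCommGroup.tendsto_nhds_zero]
  intro ε hε
  set ε' : ℝ := min ε 1 / 2 with hε'def
  have hmin0 : 0 < min ε 1 := lt_min hε one_pos
  have hε'0 : 0 < ε' := div_pos hmin0 two_pos
  have hε'1 : ε' ≤ 1 := by
    have := min_le_right ε 1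
    rw [hε'def]; linarith
  have hε'ε : ε' < ε := lt_of_lt_of_le (half_lt_self hmin0) (min_le_left _ _)
  have hpow0 : 0 < ε' ^ M := Real.rpow_pos_of_pos hε'0 M
  filter_upwards [hcore.eventually (gt_mem_nhds hpow0)] with m hm
  have hDm : Summable (fun n => |Amap r s t (xs m) n - Amap r s t x n| ^ p n) := by
    refine Summable.of_nonneg_of_le (fun n => Real.rpow_nonneg (abs_nonneg _) _)
      (fun n => rpow_sub_le M _ _ _ (hp0 n).le (hpM n)) ?_
    exact ((hsummF m).add hsummG).mul_left _
  have hσd : sigmaP r s t p (xs m - x) ≤ ENNReal.ofReal (ε' ^ M) := by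
    rw [sigmaP]
    have hcongr : ∀ n, ENNReal.ofReal (|Amap r s t (xs m - x) n| ^ p n)
        = ENNReal.ofReal (|Amap r s t (xs m) n - Amap r s t x n| ^ p n) := fun n => by
      rw [Amap_sub]
    rw [tsum_congr hcongr,
      ← ENNReal.ofReal_tsum_of_nonneg (fun n => Real.rpow_nonneg (abs_nonneg _) _) hDm]
    exact ENNReal.ofReal_le_ofReal hm.le
  have hlux := lux_le_of_sigma_le r s t p M hp hpM (xs m - x) ε' hε'0 hε'1 hσd
  rw [Real.norm_eq_abs, abs_of_nonneg (lux_nonneg r s t p (xs m - x))]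
  exact lt_of_le_of_lt hlux hε'ε
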